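/- For all n ≥ 0, the forward difference b_{n+1} - b_n equals a_{⌊n/2⌋ + 1}. -/
import Mathlib


/-- `pre2 s` is the multiset of all pairwise products of two distinct entries
(by position) of the multiset `s`, i.e. the summands of `e₂` evaluated at `s`. -/
def pre2 (s : Multiset ℕ) : Multiset ℕ := (Multiset.powersetCard 2 s).map Multiset.prod

open Classical in
/-- The finset of binary partitions of `n`: partitions all of whose parts are powers of 2. -/
noncomputable def binaryPartitions (n : ℕ) : Finset (Nat.Partition n) :=
  Finset.univ.filter fun l => ∀ p ∈ l.parts, ∃ i : ℕ, p = 2 ^ i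

/-- `a n = m₁(ImB₂(n))`: the total number of parts equal to 1 in the image of `pre2`
on binary partitions of `n` with at least two parts; by injectivity this equals
`∑_{λ ∈ B(n)} C(m₁(λ), 2)`. -/
noncomputable def a (n : ℕ) : ℕ :=
  ∑ l ∈ binaryPartitions n, Nat.choose (l.parts.count 1) 2

/-- `b n = m₂(ImB₂(n))`: the total number of parts equal to 2 in the image of `pre2`
on binary partitions of `n` with at least two parts; by injectivity this equals
`∑_{λ ∈ B(n)} m₁(λ)·m₂(λ)`. -/
noncomputable def b (n : ℕ) : ℕ :=
  ∑ l ∈ binaryPartitions n, (l.parts.count 1) * (l.parts.count 2)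

noncomputable def cc (n : ℕ) : ℕ := ∑ l ∈ binaryPartitions n, l.parts.count 1
noncomputable def dd (n : ℕ) : ℕ := ∑ l ∈ binaryPartitions n, l.parts.count 2

lemma mem_bp {n : ℕ} {l : Nat.Partition n} :
    l ∈ binaryPartitions n ↔ ∀ p ∈ l.parts, ∃ i : ℕ, p = 2 ^ i := by
  simp [binaryPartitions]

/-- insert a part 1 -/
def insOne {n : ℕ} (l : Nat.Partition n) : Nat.Partition (n + 1) where
  parts := 1 ::ₘ l.parts
  parts_pos := by
    intro i hi
    rcases Multiset.mem_cons.1 hi with h | h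
    · omega
    · exact l.parts_pos h
  parts_sum := by rw [Multiset.sum_cons, l.parts_sum, Nat.add_comm]

/-- erase a part 1 -/
def eraseOne {n : ℕ} (l : Nat.Partition (n + 1)) (h : 1 ∈ l.parts) : Nat.Partition n where
  parts := l.parts.erase 1
  parts_pos := fun hi => l.parts_pos (Multiset.mem_of_mem_erase hi)
  parts_sum := by
    have h2 : (1 ::ₘ l.parts.erase 1).sum = l.parts.sum := by rw [Multiset.cons_erase h]
    rw [Multiset.sum_cons, l.parts_sum] at h2
    omega

lemma sum_ins (n : ℕ) (f : Multiset ℕ → ℕ) :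
    ∑ l ∈ (binaryPartitions (n + 1)).filter (fun l => 1 ∈ l.parts), f l.parts
      = ∑ l ∈ binaryPartitions n, f (1 ::ₘ l.parts) := by
  refine Finset.sum_bij' (fun l hl => eraseOne l (Finset.mem_filter.1 hl).2)
    (fun l _ => insOne l) ?_ ?_ ?_ ?_ ?_
  · intro l hl
    rcases Finset.mem_filter.1 hl with ⟨hl1, hl2⟩
    rw [mem_bp] at hl1 ⊢
    exact fun p hp => hl1 p (Multiset.mem_of_mem_erase hp)
  · intro l hl
    refine Finset.mem_filter.2 ⟨?_, Multiset.mem_cons_self _ _⟩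
    rw [mem_bp] at hl ⊢
    intro p hp
    rcases Multiset.mem_cons.1 hp with h | h
    · exact ⟨0, by simp [h]⟩
    · exact hl p h
  · intro l hl
    apply Nat.Partition.ext
    exact Multiset.cons_erase (Finset.mem_filter.1 hl).2
  · intro l hl
    apply Nat.Partition.ext
    exact Multiset.erase_cons_head _ _
  · intro l hl
    congr 1
    exact (Multiset.cons_erase (Finset.mem_filter.1 hl).2).symm

lemma count_one_zero {n : ℕ} {l : Nat.Partition n} (h : 1 ∉ l.parts) :
    l.parts.count 1 = 0 := Multiset.count_eq_zero_of_notMem h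

lemma split_sum (n : ℕ) (f : Multiset ℕ → ℕ) :
    ∑ l ∈ binaryPartitions (n + 1), f l.parts
      = ∑ l ∈ binaryPartitions n, f (1 ::ₘ l.parts)
        + ∑ l ∈ (binaryPartitions (n + 1)).filter (fun l => 1 ∉ l.parts), f l.parts := by
  rw [← sum_ins n f, Finset.sum_filter_add_sum_filter_not]

/-- doubling map -/
def dbl {m : ℕ} (l : Nat.Partition m) : Nat.Partition (2 * m) where
  parts := l.parts.map (2 * ·)
  parts_pos := by
    intro i hi
    rcases Multiset.mem_map.1 hi with ⟨p, hp, rfl⟩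
    have := l.parts_pos hp
    omega
  parts_sum := by
    rw [Multiset.sum_map_mul_left]
    simp [l.parts_sum]

def hlv {m : ℕ} (l : Nat.Partition (2 * m)) (h : ∀ p ∈ l.parts, 2 ∣ p) :
    Nat.Partition m where
  parts := l.parts.map (· / 2)
  parts_pos := by
    intro i hi
    rcases Multiset.mem_map.1 hi with ⟨p, hp, rfl⟩
    have h1 := l.parts_pos hp
    have h2 := h p hp
    omega
  parts_sum := by
    have key : (l.parts.map (· / 2)).map (2 * ·) = l.parts := by
      rw [Multiset.map_map]
      conv_rhs => rw [← Multiset.map_id l.parts]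
      apply Multiset.map_congr rfl
      intro p hp
      simp only [Function.comp_apply, id_eq]
      exact Nat.mul_div_cancel' (h p hp)
    have h2 : ((l.parts.map (· / 2)).map (2 * ·)).sum = 2 * m := by
      rw [key, l.parts_sum]
    rw [Multiset.sum_map_mul_left] at h2
    simp at h2
    omega

lemma bp_no_one_even {n : ℕ} {l : Nat.Partition n} (hl : l ∈ binaryPartitions n)
    (h1 : 1 ∉ l.parts) : ∀ p ∈ l.parts, 2 ∣ p := by
  intro p hp
  rcases mem_bp.1 hl p hp with ⟨i, rfl⟩
  cases i with
  | zero => exact absurd (by simpa using hp) h1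
  | succ j => exact ⟨2 ^ j, by ring⟩

lemma sum_dbl (m : ℕ) (f : Multiset ℕ → ℕ) :
    ∑ l ∈ (binaryPartitions (2 * m)).filter (fun l => 1 ∉ l.parts), f l.parts
      = ∑ l ∈ binaryPartitions m, f (l.parts.map (2 * ·)) := by
  refine Finset.sum_bij' (fun l hl => hlv l (bp_no_one_even (Finset.mem_filter.1 hl).1
    (Finset.mem_filter.1 hl).2)) (fun l _ => dbl l) ?_ ?_ ?_ ?_ ?_
  · intro l hl
    rcases Finset.mem_filter.1 hl with ⟨hl1, hl2⟩
    rw [mem_bp] at hl1 ⊢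
    intro q hq
    rcases Multiset.mem_map.1 hq with ⟨p, hp, rfl⟩
    rcases hl1 p hp with ⟨i, rfl⟩
    cases i with
    | zero => exact absurd hp (by simpa using hl2)
    | succ j => exact ⟨j, by rw [pow_succ]; omega⟩
  · intro l hl
    refine Finset.mem_filter.2 ⟨?_, ?_⟩
    · rw [mem_bp] at hl ⊢
      intro q hq
      rcases Multiset.mem_map.1 hq with ⟨p, hp, rfl⟩
      rcases hl p hp with ⟨i, rfl⟩
      exact ⟨i + 1, by ring⟩
    · intro hc
      rcases Multiset.mem_map.1 hc with ⟨p, hp, hpe⟩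
      omega
  · intro l hl
    apply Nat.Partition.ext
    show (l.parts.map (· / 2)).map (2 * ·) = l.parts
    rw [Multiset.map_map]
    conv_rhs => rw [← Multiset.map_id l.parts]
    apply Multiset.map_congr rfl
    intro p hp
    simp only [Function.comp_apply, id_eq]
    exact Nat.mul_div_cancel' (bp_no_one_even (Finset.mem_filter.1 hl).1
      (Finset.mem_filter.1 hl).2 p hp)
  · intro l hl
    apply Nat.Partition.ext
    show (l.parts.map (2 * ·)).map (· / 2) = l.parts
    rw [Multiset.map_map]
    conv_rhs => rw [← Multiset.map_id l.parts]
    apply Multiset.map_congr rfl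
    intro p hp
    simp only [Function.comp_apply, id_eq]
    omega
  · intro l hl
    congr 1
    show l.parts = (l.parts.map (· / 2)).map (2 * ·)
    rw [Multiset.map_map]
    conv_lhs => rw [← Multiset.map_id l.parts]
    apply Multiset.map_congr rfl
    intro p hp
    simp only [Function.comp_apply, id_eq]
    exact (Nat.mul_div_cancel' (bp_no_one_even (Finset.mem_filter.1 hl).1
      (Finset.mem_filter.1 hl).2 p hp)).symm

lemma filter_no_one_odd {n : ℕ} (hn : ¬ 2 ∣ n) :
    (binaryPartitions n).filter (fun l => 1 ∉ l.parts) = ∅ := by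
  rw [Finset.filter_eq_empty_iff]
  intro l hl h1
  have : (2 : ℕ) ∣ l.parts.sum := Multiset.dvd_sum (bp_no_one_even hl h1)
  rw [l.parts_sum] at this
  exact hn this

lemma count_two_dbl (s : Multiset ℕ) : (s.map (2 * ·)).count 2 = s.count 1 := by
  have := Multiset.count_map_eq_count' (2 * ·) s
    (fun x y h => by simpa using h) 1
  simpa using this

lemma L1 (n : ℕ) : b (n + 1) = b n + dd n := by
  unfold b dd
  rw [split_sum n (fun s => s.count 1 * s.count 2)]
  have h2 : ∀ l ∈ (binaryPartitions (n + 1)).filter (fun l => 1 ∉ l.parts),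
      l.parts.count 1 * l.parts.count 2 = 0 := by
    intro l hl
    rw [count_one_zero (Finset.mem_filter.1 hl).2, Nat.zero_mul]
  rw [Finset.sum_eq_zero h2, Nat.add_zero, ← Finset.sum_add_distrib]
  apply Finset.sum_congr rfl
  intro l _
  rw [Multiset.count_cons_self, Multiset.count_cons_of_ne (by norm_num)]
  ring

lemma L2 (n : ℕ) : a (n + 1) = a n + cc n := by
  unfold a cc
  rw [split_sum n (fun s => Nat.choose (s.count 1) 2)]
  have h2 : ∀ l ∈ (binaryPartitions (n + 1)).filter (fun l => 1 ∉ l.parts),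
      Nat.choose (l.parts.count 1) 2 = 0 := by
    intro l hl
    rw [count_one_zero (Finset.mem_filter.1 hl).2]
    rfl
  rw [Finset.sum_eq_zero h2, Nat.add_zero, ← Finset.sum_add_distrib]
  apply Finset.sum_congr rfl
  intro l _
  rw [Multiset.count_cons_self]
  have : (l.parts.count 1 + 1).choose 2 = (l.parts.count 1).choose 1 + (l.parts.count 1).choose 2 :=
    Nat.choose_succ_succ _ _
  rw [this, Nat.choose_one_right]
  ring

lemma L3 (n : ℕ) : dd (n + 1) = dd n + if 2 ∣ (n + 1) then cc ((n + 1) / 2) else 0 := by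
  unfold dd
  rw [split_sum n (fun s => s.count 2)]
  congr 1
  · apply Finset.sum_congr rfl
    intro l _
    rw [Multiset.count_cons_of_ne (by norm_num)]
  · by_cases h : 2 ∣ (n + 1)
    · rw [if_pos h]
      obtain ⟨m, hm⟩ := h
      have hm2 : (n + 1) / 2 = m := by omega
      rw [hm2, hm, sum_dbl m (fun s => s.count 2)]
      unfold cc
      exact Finset.sum_congr rfl fun l _ => count_two_dbl l.parts
    · rw [if_neg h, filter_no_one_odd h, Finset.sum_empty]

lemma parts_zero (l : Nat.Partition 0) : l.parts = 0 := by
  apply Multiset.eq_zero_of_forall_notMem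
  intro p hp
  have h1 := l.parts_pos hp
  have h2 : p ≤ l.parts.sum := Multiset.le_sum_of_mem hp
  rw [l.parts_sum] at h2
  omega

lemma dd_zero : dd 0 = 0 := by
  unfold dd
  apply Finset.sum_eq_zero
  intro l _
  rw [parts_zero l]
  rfl

lemma a_zero : a 0 = 0 := by
  unfold a
  apply Finset.sum_eq_zero
  intro l _
  rw [parts_zero l]
  rfl

lemma cc_zero : cc 0 = 0 := by
  unfold cc
  apply Finset.sum_eq_zero
  intro l _
  rw [parts_zero l]
  rfl

lemma key_dd (n : ℕ) : dd n = a (n / 2 + 1) := by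
  induction n with
  | zero => rw [dd_zero, L2, a_zero, cc_zero]
  | succ n ih =>
    rw [L3 n, ih]
    by_cases h : 2 ∣ (n + 1)
    · rw [if_pos h]
      obtain ⟨m, hm⟩ := h
      have h1 : (n + 1) / 2 = m := by omega
      have h2 : n / 2 = m - 1 := by omega
      have h3 : m - 1 + 1 = m := by omega
      rw [h1, h2, h3, ← L2 m]
    · rw [if_neg h, Nat.add_zero]
      congr 2
      omega

theorem stmt_10 (n : ℕ) :
    (b (n + 1) : ℤ) - (b n : ℤ) = (a (n / 2 + 1) : ℤ) := by
  rw [L1 n, key_dd n]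
  push_cast
  ring
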